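/- Let u: ℤ → ℂ be a finitely supported 1D filter with û(0) = 1, let n ≥ 1, and let a^{2D} be the 2D filter defined by â^{2D}(ω₁,ω₂) = ½[û(ω₁+ω₂) + û(ω₁−ω₂)e^{−iω₂}]. Then a^{2D} has order n linear-phase moments with phase (1/2, 1/2) if and only if u has order n linear-phase moments with phase 1/2. -/

import Mathlib

open Complex Real

/-- Fourier series of a finitely supported 1D filter. -/
noncomputable def fhat1 (u : ℤ → ℂ) (ω : ℝ) : ℂ :=
  ∑ᶠ k : ℤ, u k * Complex.exp (-(Complex.I) * (k : ℂ) * (ω : ℂ))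

/-- Fourier series of a finitely supported 2D filter. -/
noncomputable def fhat2 (a : ℤ × ℤ → ℂ) (ω : ℝ × ℝ) : ℂ :=
  ∑ᶠ k : ℤ × ℤ, a k * Complex.exp (-(Complex.I) * ((k.1 : ℂ) * (ω.1 : ℂ) + (k.2 : ℂ) * (ω.2 : ℂ)))

/-- Order `n` linear-phase moments with phase `c ∈ ℝ²` for a 2D filter. -/
def LPM2D (a : ℤ × ℤ → ℂ) (n : ℕ) (c : ℝ × ℝ) : Prop :=
  ∀ μ : ℕ × ℕ, μ.1 + μ.2 < n →
    ∑ᶠ k : ℤ × ℤ, a k * (k.1 : ℂ) ^ μ.1 * (k.2 : ℂ) ^ μ.2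
      = ((c.1 : ℂ)) ^ μ.1 * ((c.2 : ℂ)) ^ μ.2

/-- A 1D filter has order `n` linear-phase moments with phase `1/2`. -/
def LPM1D (u : ℤ → ℂ) (n : ℕ) : Prop :=
  ∀ j : ℕ, j < n → ∑ᶠ k : ℤ, u k * (k : ℂ) ^ j = (1 / 2 : ℂ) ^ j

open Polynomial

lemma fsum1 (u : ℤ → ℂ) (hufin : (Function.support u).Finite) (g : ℤ → ℂ) :
    ∑ᶠ k : ℤ, u k * g k = ∑ k ∈ hufin.toFinset, u k * g k := by
  apply finsum_eq_sum_of_support_subset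
  intro k hk
  simp only [Function.mem_support] at hk
  rw [Set.Finite.coe_toFinset]
  exact fun h => hk (by simp [h])

lemma fsum2 (a : ℤ × ℤ → ℂ) (hafin : (Function.support a).Finite) (g : ℤ × ℤ → ℂ) :
    ∑ᶠ k : ℤ × ℤ, a k * g k = ∑ k ∈ hafin.toFinset, a k * g k := by
  apply finsum_eq_sum_of_support_subset
  intro k hk
  simp only [Function.mem_support] at hk
  rw [Set.Finite.coe_toFinset]
  exact fun h => hk (by simp [h])

lemma expsum_iteratedDeriv {ι : Type*} (F : Finset ι) (γ : ι → ℂ) (m : ℕ) :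
    ∀ c : ι → ℂ, iteratedDeriv m (fun s : ℝ => ∑ k ∈ F, c k * Complex.exp (γ k * s)) =
      fun s : ℝ => ∑ k ∈ F, c k * (γ k) ^ m * Complex.exp (γ k * s) := by
  induction m with
  | zero => intro c; simp
  | succ m ih =>
    intro c
    rw [iteratedDeriv_succ']
    have hd : deriv (fun s : ℝ => ∑ k ∈ F, c k * Complex.exp (γ k * s)) =
        fun s : ℝ => ∑ k ∈ F, (c k * γ k) * Complex.exp (γ k * s) := by
      funext s
      have : HasDerivAt (fun s : ℝ => ∑ k ∈ F, c k * Complex.exp (γ k * s))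
          (∑ k ∈ F, (c k * γ k) * Complex.exp (γ k * s)) s := by
        apply HasDerivAt.fun_sum
        intro k _
        have h1 : HasDerivAt (fun s : ℝ => (γ k) * (s : ℂ)) (γ k) s := by
          simpa using ((hasDerivAt_id s).ofReal_comp).const_mul (γ k)
        simpa [mul_comm, mul_assoc, mul_left_comm] using (h1.cexp).const_mul (c k)
      exact this.deriv
    rw [hd, ih (fun k => c k * γ k)]
    funext s
    refine Finset.sum_congr rfl fun k _ => by ring

lemma key (u : ℤ → ℂ) (hufin : (Function.support u).Finite)
    (a : ℤ × ℤ → ℂ) (hafin : (Function.support a).Finite)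
    (hfa : ∀ ω : ℝ × ℝ, fhat2 a ω
      = (1 / 2 : ℂ) * (fhat1 u (ω.1 + ω.2)
          + fhat1 u (ω.1 - ω.2) * Complex.exp (-(Complex.I) * (ω.2 : ℂ))))
    (t₁ t₂ : ℝ) (m : ℕ) :
    ∑ k ∈ hafin.toFinset, a k * ((k.1 : ℂ) * (t₁ : ℂ) + (k.2 : ℂ) * (t₂ : ℂ)) ^ m
      = (1 / 2 : ℂ) * ∑ k ∈ hufin.toFinset,
          u k * (((k : ℂ) * ((t₁ : ℂ) + (t₂ : ℂ))) ^ m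
            + ((k : ℂ) * (t₁ : ℂ) + (1 - (k : ℂ)) * (t₂ : ℂ)) ^ m) := by
  classical
  set Fa := hafin.toFinset
  set Fu := hufin.toFinset
  set γa : ℤ × ℤ → ℂ := fun k => -I * ((k.1 : ℂ) * (t₁ : ℂ) + (k.2 : ℂ) * (t₂ : ℂ)) with hγa
  set γu : ℤ × Bool → ℂ := fun p => if p.2 then -I * ((p.1 : ℂ) * ((t₁ : ℂ) + (t₂ : ℂ)))
      else -I * ((p.1 : ℂ) * (t₁ : ℂ) + (1 - (p.1 : ℂ)) * (t₂ : ℂ)) with hγu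
  have hfg : (fun s : ℝ => ∑ k ∈ Fa, a k * Complex.exp (γa k * s))
      = (fun s : ℝ => ∑ p ∈ Fu ×ˢ (Finset.univ : Finset Bool),
          (u p.1 / 2) * Complex.exp (γu p * s)) := by
    funext s
    have hL : ∑ k ∈ Fa, a k * Complex.exp (γa k * s) = fhat2 a (s * t₁, s * t₂) := by
      rw [fhat2, fsum2 a hafin]
      refine Finset.sum_congr rfl fun k _ => ?_
      congr 1
      simp only [hγa]
      push_cast
      ring
    have hR : ∑ p ∈ Fu ×ˢ (Finset.univ : Finset Bool), (u p.1 / 2) * Complex.exp (γu p * s)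
        = (1 / 2 : ℂ) * (fhat1 u (s * t₁ + s * t₂)
            + fhat1 u (s * t₁ - s * t₂) * Complex.exp (-(Complex.I) * ((s * t₂ : ℝ) : ℂ))) := by
      rw [Finset.sum_product]
      simp only [Fintype.sum_bool]
      rw [fhat1, fhat1, fsum1 u hufin, fsum1 u hufin, Finset.sum_mul, mul_add,
        Finset.mul_sum, Finset.mul_sum, ← Finset.sum_add_distrib]
      refine Finset.sum_congr rfl fun k _ => ?_
      simp only [hγu, if_pos, if_neg, Bool.false_eq_true, ite_true, ite_false]
      have e1 : Complex.exp (-I * (k : ℂ) * (((s * t₁ + s * t₂ : ℝ)) : ℂ))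
          = Complex.exp ((-I * ((k : ℂ) * ((t₁ : ℂ) + (t₂ : ℂ)))) * (s : ℂ)) := by
        congr 1; push_cast; ring
      have e3 : Complex.exp (-I * (k : ℂ) * (((s * t₁ - s * t₂ : ℝ)) : ℂ))
            * Complex.exp (-I * ((s * t₂ : ℝ) : ℂ))
          = Complex.exp ((-I * ((k : ℂ) * (t₁ : ℂ) + (1 - (k : ℂ)) * (t₂ : ℂ))) * (s : ℂ)) := by
        rw [← Complex.exp_add]; congr 1; push_cast; ring
      rw [mul_assoc (u k), e3, e1]
      ring
    rw [hL, hR, hfa (s * t₁, s * t₂)]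
  have hder := congrFun (congrArg (iteratedDeriv m) hfg) 0
  rw [expsum_iteratedDeriv Fa γa m a,
    expsum_iteratedDeriv (Fu ×ˢ (Finset.univ : Finset Bool)) γu m (fun p => u p.1 / 2)] at hder
  simp only [Complex.ofReal_zero, mul_zero, Complex.exp_zero, mul_one] at hder
  have hne : (-I) ^ m ≠ 0 := pow_ne_zero _ (neg_ne_zero.mpr I_ne_zero)
  apply mul_left_cancel₀ hne
  calc (-I) ^ m * ∑ k ∈ Fa, a k * ((k.1 : ℂ) * (t₁ : ℂ) + (k.2 : ℂ) * (t₂ : ℂ)) ^ m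
      = ∑ k ∈ Fa, a k * (γa k) ^ m := by
        rw [Finset.mul_sum]; refine Finset.sum_congr rfl fun k _ => ?_
        rw [hγa]; rw [mul_pow]; ring
    _ = ∑ p ∈ Fu ×ˢ (Finset.univ : Finset Bool), (u p.1 / 2) * (γu p) ^ m := hder
    _ = (-I) ^ m * ((1 / 2 : ℂ) * ∑ k ∈ Fu,
          u k * (((k : ℂ) * ((t₁ : ℂ) + (t₂ : ℂ))) ^ m
            + ((k : ℂ) * (t₁ : ℂ) + (1 - (k : ℂ)) * (t₂ : ℂ)) ^ m)) := by
        rw [Finset.sum_product]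
        simp only [Fintype.sum_bool]
        rw [Finset.mul_sum, Finset.mul_sum]
        refine Finset.sum_congr rfl fun k _ => ?_
        simp only [hγu, ite_true, ite_false, Bool.false_eq_true]
        simp only [mul_pow]
        ring

lemma linpow_eq (x y : ℂ) (i m : ℕ) :
    ((C x * X) ^ i * C y ^ (m - i) * (m.choose i : ℂ[X])) =
      C (x ^ i * y ^ (m - i) * (m.choose i : ℂ)) * X ^ i := by
  have : (m.choose i : ℂ[X]) = C (m.choose i : ℂ) := (Polynomial.C_eq_natCast _).symm
  rw [this, mul_pow, ← C_pow, ← C_pow, C_mul, C_mul]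
  ring

lemma coeff_linpow (x y : ℂ) (m j : ℕ) (hj : j ≤ m) :
    ((C x * X + C y) ^ m).coeff j = (m.choose j : ℂ) * x ^ j * y ^ (m - j) := by
  rw [add_pow, Polynomial.finset_sum_coeff, Finset.sum_eq_single j]
  · rw [linpow_eq, coeff_C_mul, coeff_X_pow, if_pos rfl, mul_one]; ring
  · intro i _ hij
    rw [linpow_eq, coeff_C_mul, coeff_X_pow, if_neg (fun h => hij h.symm), mul_zero]
  · intro h
    exact absurd (Finset.mem_range.mpr (Nat.lt_succ_of_le hj)) h

/-- `a^{2D}` has order `n` linear-phase moments with phase `(1/2,1/2)` iff `u`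
has order `n` linear-phase moments with phase `1/2`. -/
theorem stmt_8 (u : ℤ → ℂ) (hufin : (Function.support u).Finite) (hu0 : fhat1 u 0 = 1)
    (n : ℕ) (hn : 1 ≤ n)
    (a : ℤ × ℤ → ℂ) (hafin : (Function.support a).Finite)
    (hfa : ∀ ω : ℝ × ℝ, fhat2 a ω
      = (1 / 2 : ℂ) * (fhat1 u (ω.1 + ω.2)
          + fhat1 u (ω.1 - ω.2) * Complex.exp (-(Complex.I) * (ω.2 : ℂ)))) :
    LPM2D a n (1 / 2, 1 / 2) ↔ LPM1D u n := by
  classical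
  set Fa := hafin.toFinset with hFa
  set Fu := hufin.toFinset with hFu
  constructor
  · -- forward
    intro hA j hj
    have h2 := hA (j, 0) (by simpa using hj)
    have hfin2 : ∑ᶠ k : ℤ × ℤ, a k * (k.1 : ℂ) ^ j * (k.2 : ℂ) ^ 0
        = ∑ k ∈ Fa, a k * (k.1 : ℂ) ^ j := by
      have : ∀ k : ℤ × ℤ, a k * (k.1 : ℂ) ^ j * (k.2 : ℂ) ^ 0 = a k * ((k.1 : ℂ) ^ j) := by
        intro k; ring
      rw [finsum_congr this, fsum2 a hafin]
    have hkey := key u hufin a hafin hfa 1 0 j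
    simp only [Complex.ofReal_one, Complex.ofReal_zero, mul_one, mul_zero, add_zero] at hkey
    -- hkey : ∑ k ∈ Fa, a k * (k.1:ℂ)^j = 1/2 * ∑ k ∈ Fu, u k * ((k:ℂ)^j + (k:ℂ)^j)
    have hsum : (1 / 2 : ℂ) * ∑ k ∈ Fu, u k * ((k : ℂ) ^ j + (k : ℂ) ^ j)
        = ∑ k ∈ Fu, u k * (k : ℂ) ^ j := by
      rw [Finset.mul_sum]
      refine Finset.sum_congr rfl fun k _ => by ring
    rw [fsum1 u hufin (fun k => (k : ℂ) ^ j), ← hsum, ← hkey, ← hfin2, h2]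
    simp
  · -- reverse
    intro hU μ hμ
    set m := μ.1 + μ.2 with hm
    have hμ1 : μ.1 ≤ m := Nat.le_add_right _ _
    have hμ2 : m - μ.1 = μ.2 := by omega
    set P : Polynomial ℂ := ∑ k ∈ Fa, C (a k) * (C ((k.1 : ℂ)) * X + C ((k.2 : ℂ))) ^ m with hP
    set Q : Polynomial ℂ := C (1 / 2 : ℂ) * ∑ k ∈ Fu, C (u k) *
        ((C ((k : ℂ)) * X + C ((k : ℂ))) ^ m + (C ((k : ℂ)) * X + C (1 - (k : ℂ))) ^ m) with hQ
    have heval : ∀ t : ℝ, P.eval (t : ℂ) = Q.eval (t : ℂ) := by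
      intro t
      have hk := key u hufin a hafin hfa t 1 m
      simp only [Complex.ofReal_one, mul_one] at hk
      simp only [hP, hQ, Polynomial.eval_finset_sum, Polynomial.eval_mul, Polynomial.eval_add,
        Polynomial.eval_pow, Polynomial.eval_C, Polynomial.eval_X]
      rw [hk]
      congr 1
      refine Finset.sum_congr rfl fun k _ => ?_
      have : (k : ℂ) * ((t : ℂ) + 1) = (k : ℂ) * (t : ℂ) + (k : ℂ) := by ring
      rw [this]
    have hPQ : P = Q := by
      apply Polynomial.eq_of_infinite_eval_eq
      apply Set.Infinite.mono (s := Set.range (fun t : ℝ => (t : ℂ)))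
      · rintro x ⟨t, rfl⟩; exact heval t
      · exact Set.infinite_range_of_injective Complex.ofReal_injective
    have hcoeff := congrArg (fun p : Polynomial ℂ => p.coeff μ.1) hPQ
    simp only [hP, hQ, Polynomial.finset_sum_coeff, Polynomial.coeff_C_mul,
      Polynomial.coeff_add] at hcoeff
    rw [Finset.sum_congr rfl (fun k _ => by
        rw [coeff_linpow _ _ _ _ hμ1, hμ2])] at hcoeff
    rw [Finset.sum_congr rfl (fun k (_ : k ∈ Fu) => by
        rw [coeff_linpow _ _ _ _ hμ1, coeff_linpow _ _ _ _ hμ1, hμ2])] at hcoeff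
    -- hcoeff : ∑ k ∈ Fa, a k * (choose * k.1^μ1 * k.2^μ2)
    --        = 1/2 * ∑ k ∈ Fu, u k * (choose * k^μ1 * k^μ2 + choose * k^μ1 * (1-k)^μ2)
    have hch : ((m.choose μ.1 : ℂ)) ≠ 0 := by
      exact_mod_cast Nat.cast_ne_zero.mpr (Nat.choose_pos hμ1).ne'
    have hL : ∑ k ∈ Fa, a k * ((m.choose μ.1 : ℂ) * (k.1 : ℂ) ^ μ.1 * (k.2 : ℂ) ^ μ.2)
        = (m.choose μ.1 : ℂ) * ∑ k ∈ Fa, a k * (k.1 : ℂ) ^ μ.1 * (k.2 : ℂ) ^ μ.2 := by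
      rw [Finset.mul_sum]; exact Finset.sum_congr rfl fun k _ => by ring
    have hR : (1 / 2 : ℂ) * ∑ k ∈ Fu, u k * ((m.choose μ.1 : ℂ) * (k : ℂ) ^ μ.1 * (k : ℂ) ^ μ.2
          + (m.choose μ.1 : ℂ) * (k : ℂ) ^ μ.1 * (1 - (k : ℂ)) ^ μ.2)
        = (m.choose μ.1 : ℂ) * ((1 / 2 : ℂ) * ∑ k ∈ Fu,
            u k * ((k : ℂ) ^ μ.1 * (k : ℂ) ^ μ.2 + (k : ℂ) ^ μ.1 * (1 - (k : ℂ)) ^ μ.2)) := by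
      rw [Finset.mul_sum, Finset.mul_sum, Finset.mul_sum]
      exact Finset.sum_congr rfl fun k _ => by ring
    rw [hL, hR] at hcoeff
    have hmain := mul_left_cancel₀ hch hcoeff
    -- Now evaluate the u-sums.
    have hS1 : ∑ k ∈ Fu, u k * (k : ℂ) ^ m = (1 / 2 : ℂ) ^ m := by
      rw [← fsum1 u hufin (fun k => (k : ℂ) ^ m)]
      exact hU m hμ
    have hS2 : ∑ k ∈ Fu, u k * ((k : ℂ) ^ μ.1 * (1 - (k : ℂ)) ^ μ.2)
        = (1 / 2 : ℂ) ^ μ.1 * (1 / 2 : ℂ) ^ μ.2 := by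
      have hexp : ∀ k : ℤ, u k * ((k : ℂ) ^ μ.1 * (1 - (k : ℂ)) ^ μ.2)
          = ∑ i ∈ Finset.range (μ.2 + 1),
              u k * (k : ℂ) ^ (μ.1 + (μ.2 - i)) * ((-1 : ℂ) ^ (μ.2 - i) * (μ.2.choose i : ℂ)) := by
        intro k
        have h1 : (1 - (k : ℂ)) ^ μ.2 = ∑ i ∈ Finset.range (μ.2 + 1),
            (1 : ℂ) ^ i * (-(k : ℂ)) ^ (μ.2 - i) * (μ.2.choose i : ℂ) := by
          rw [← add_pow]; ring_nf
        rw [h1, Finset.mul_sum, Finset.mul_sum]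
        refine Finset.sum_congr rfl fun i _ => ?_
        rw [neg_pow, pow_add]
        ring
      calc ∑ k ∈ Fu, u k * ((k : ℂ) ^ μ.1 * (1 - (k : ℂ)) ^ μ.2)
          = ∑ k ∈ Fu, ∑ i ∈ Finset.range (μ.2 + 1),
              u k * (k : ℂ) ^ (μ.1 + (μ.2 - i)) * ((-1 : ℂ) ^ (μ.2 - i) * (μ.2.choose i : ℂ)) :=
            Finset.sum_congr rfl fun k _ => hexp k
        _ = ∑ i ∈ Finset.range (μ.2 + 1), ((-1 : ℂ) ^ (μ.2 - i) * (μ.2.choose i : ℂ)) *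
              ∑ k ∈ Fu, u k * (k : ℂ) ^ (μ.1 + (μ.2 - i)) := by
            rw [Finset.sum_comm]
            refine Finset.sum_congr rfl fun i _ => ?_
            rw [Finset.mul_sum]
            exact Finset.sum_congr rfl fun k _ => by ring
        _ = ∑ i ∈ Finset.range (μ.2 + 1), ((-1 : ℂ) ^ (μ.2 - i) * (μ.2.choose i : ℂ)) *
              (1 / 2 : ℂ) ^ (μ.1 + (μ.2 - i)) := by
            refine Finset.sum_congr rfl fun i _ => ?_
            congr 1
            rw [← fsum1 u hufin (fun k => (k : ℂ) ^ (μ.1 + (μ.2 - i)))]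
            exact hU _ (by omega)
        _ = (1 / 2 : ℂ) ^ μ.1 * ∑ i ∈ Finset.range (μ.2 + 1),
              (1 : ℂ) ^ i * (-(1 / 2 : ℂ)) ^ (μ.2 - i) * (μ.2.choose i : ℂ) := by
            rw [Finset.mul_sum]
            refine Finset.sum_congr rfl fun i _ => ?_
            rw [neg_pow (1 / 2 : ℂ), pow_add]
            ring
        _ = (1 / 2 : ℂ) ^ μ.1 * (1 + -(1 / 2 : ℂ)) ^ μ.2 := by rw [← add_pow]
        _ = (1 / 2 : ℂ) ^ μ.1 * (1 / 2 : ℂ) ^ μ.2 := by norm_num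
    have hS1' : ∑ k ∈ Fu, u k * ((k : ℂ) ^ μ.1 * (k : ℂ) ^ μ.2) = (1 / 2 : ℂ) ^ m := by
      rw [← hS1]
      exact Finset.sum_congr rfl fun k _ => by rw [← pow_add]
    have hRHS : (1 / 2 : ℂ) * ∑ k ∈ Fu,
        u k * ((k : ℂ) ^ μ.1 * (k : ℂ) ^ μ.2 + (k : ℂ) ^ μ.1 * (1 - (k : ℂ)) ^ μ.2)
        = (1 / 2 : ℂ) ^ μ.1 * (1 / 2 : ℂ) ^ μ.2 := by
      rw [Finset.sum_congr rfl (fun k (_ : k ∈ Fu) => mul_add (u k) _ _),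
        Finset.sum_add_distrib, hS1', hS2, hm, pow_add]
      ring
    rw [hRHS] at hmain
    have hfin2 : ∑ᶠ k : ℤ × ℤ, a k * (k.1 : ℂ) ^ μ.1 * (k.2 : ℂ) ^ μ.2
        = ∑ k ∈ Fa, a k * (k.1 : ℂ) ^ μ.1 * (k.2 : ℂ) ^ μ.2 := by
      have : ∀ k : ℤ × ℤ, a k * (k.1 : ℂ) ^ μ.1 * (k.2 : ℂ) ^ μ.2
          = a k * ((k.1 : ℂ) ^ μ.1 * (k.2 : ℂ) ^ μ.2) := fun k => by ring
      rw [finsum_congr this, fsum2 a hafin]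
      exact Finset.sum_congr rfl fun k _ => by ring
    rw [hfin2, hmain]
    push_cast
    norm_num
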